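/- For all integers k ≥ 3 and n ≥ 2, and any index i with 1 ≤ i ≤ n, the divisor (k−1)·ε_i on the hinge graph H_{k,n} is linearly equivalent to the divisor δ; that is, (k−1)·ε_i − δ lies in Prin(H_{k,n}). -/

import Mathlib

/-- Vertex set of the hinge graph `H_{k,n}`: two shared vertices `u, w`
(encoded as `Sum.inl 0`, `Sum.inl 1`) together with the vertices
`v_{i,j}` (encoded as `Sum.inr (i, j)`, zero-indexed). -/
abbrev HingeVertex (k n : ℕ) : Type := Fin 2 ⊕ (Fin n × Fin (k - 2))

/-- The shared vertex `u`. -/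
def hu (k n : ℕ) : HingeVertex k n := Sum.inl 0

/-- The shared vertex `w`. -/
def hw (k n : ℕ) : HingeVertex k n := Sum.inl 1

/-- The vertex `v_{i+1,j+1}` of the `i+1`-st cycle (zero-indexed here). -/
def hv (k n : ℕ) (i : Fin n) (j : Fin (k - 2)) : HingeVertex k n := Sum.inr (i, j)

/-- The base (Boolean) edge relation of the hinge graph: `u-w`, `u-v_{i,1}`,
`v_{i,j}-v_{i,j+1}`, `v_{i,k-2}-w`. -/
def hingeRelB (k n : ℕ) : HingeVertex k n → HingeVertex k n → Bool
  | Sum.inl a, Sum.inl b => a != b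
  | Sum.inl a, Sum.inr p => a == 0 && p.2.val == 0
  | Sum.inr p, Sum.inl b => b == 1 && p.2.val == k - 3
  | Sum.inr p, Sum.inr q => p.1 == q.1 && q.2.val == p.2.val + 1

/-- The hinge graph `H_{k,n}`: `n` cycles of length `k` glued along the edge `{u, w}`. -/
def Hinge (k n : ℕ) : SimpleGraph (HingeVertex k n) :=
  SimpleGraph.fromRel (fun x y => hingeRelB k n x y = true)

instance (k n : ℕ) : DecidableRel (Hinge k n).Adj := fun x y =>
  inferInstanceAs (Decidable (x ≠ y ∧ (hingeRelB k n x y = true ∨ hingeRelB k n y x = true)))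

/-- The number of spanning trees of a graph `G`: the number of edge sets `s ⊆ E(G)`
whose associated spanning subgraph (on all of `V`) is connected and acyclic. -/
noncomputable def spanningTreeCount {V : Type*} (G : SimpleGraph V) : ℕ :=
  Set.ncard {s : Set (Sym2 V) | s ⊆ G.edgeSet ∧ (SimpleGraph.fromEdgeSet s).IsTree}

/-- The degree homomorphism on divisors. -/
def degHom (V : Type*) [Fintype V] : (V → ℤ) →+ ℤ where
  toFun D := ∑ v, D v
  map_zero' := by simp
  map_add' x y := by simp [Finset.sum_add_distrib]

/-- The group `Div⁰` of degree-zero divisors. -/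
def Div0 (V : Type*) [Fintype V] : AddSubgroup (V → ℤ) := (degHom V).ker

/-- The group of principal divisors: the image of the Laplacian `L = Deg - A`. -/
def Prin {V : Type*} [Fintype V] [DecidableEq V] (G : SimpleGraph V) [DecidableRel G.Adj] :
    AddSubgroup (V → ℤ) :=
  AddMonoidHom.range (Matrix.mulVecLin (G.lapMatrix ℤ)).toAddMonoidHom

/-- The critical group `K(G) = Div⁰(G) / Prin(G)`. -/
def CriticalGroup {V : Type*} [Fintype V] [DecidableEq V] (G : SimpleGraph V)
    [DecidableRel G.Adj] : Type _ :=
  Div0 V ⧸ ((Prin G).addSubgroupOf (Div0 V))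

noncomputable instance {V : Type*} [Fintype V] [DecidableEq V] (G : SimpleGraph V)
    [DecidableRel G.Adj] : AddCommGroup (CriticalGroup G) :=
  inferInstanceAs (AddCommGroup (Div0 V ⧸ ((Prin G).addSubgroupOf (Div0 V))))

/-- The class of a degree-zero divisor in the critical group. -/
def divisorClass {V : Type*} [Fintype V] [DecidableEq V] (G : SimpleGraph V)
    [DecidableRel G.Adj] (D : V → ℤ) (hD : D ∈ Div0 V) : CriticalGroup G :=
  (QuotientAddGroup.mk (⟨D, hD⟩ : Div0 V) :
    Div0 V ⧸ ((Prin G).addSubgroupOf (Div0 V)))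

/-- The divisor with value `1` at `x`, `-1` at `y` (for `x ≠ y`) and `0` elsewhere. -/
def pointDiff {V : Type*} [DecidableEq V] (x y : V) : V → ℤ :=
  fun z => (if z = x then 1 else 0) - (if z = y then 1 else 0)

lemma pointDiff_mem {V : Type*} [Fintype V] [DecidableEq V] (x y : V) :
    pointDiff x y ∈ Div0 V := by
  simp [Div0, AddMonoidHom.mem_ker, degHom, pointDiff, Finset.sum_sub_distrib]

open Finset Matrix

lemma lap_edge_formula {V : Type*} [Fintype V] [DecidableEq V] (G : SimpleGraph V)
    [DecidableRel G.Adj] (x : V → ℤ) (v : V) :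
    (G.lapMatrix ℤ *ᵥ x) v = ∑ u, if G.Adj v u then x v - x u else 0 := by
  rw [SimpleGraph.lapMatrix_mulVec_apply, SimpleGraph.degree_eq_sum_if_adj,
    SimpleGraph.neighborFinset_eq_filter, Finset.sum_filter]
  rw [Finset.sum_mul, ← Finset.sum_sub_distrib]
  congr 1; ext u
  split <;> simp

lemma hinge_adj_inl_inr (k n : ℕ) (a : Fin 2) (p : Fin n × Fin (k-2)) :
    (Hinge k n).Adj (Sum.inl a) (Sum.inr p) ↔
      (a = 0 ∧ p.2.val = 0) ∨ (a = 1 ∧ p.2.val = k - 3) := by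
  simp [Hinge, SimpleGraph.fromRel_adj, hingeRelB]

lemma hinge_adj_inr_inl (k n : ℕ) (a : Fin 2) (p : Fin n × Fin (k-2)) :
    (Hinge k n).Adj (Sum.inr p) (Sum.inl a) ↔
      (a = 0 ∧ p.2.val = 0) ∨ (a = 1 ∧ p.2.val = k - 3) := by
  rw [(Hinge k n).adj_comm, hinge_adj_inl_inr]

lemma hinge_adj_inr_inr (k n : ℕ) (p q : Fin n × Fin (k-2)) :
    (Hinge k n).Adj (Sum.inr p) (Sum.inr q) ↔
      p.1 = q.1 ∧ (q.2.val = p.2.val + 1 ∨ p.2.val = q.2.val + 1) := by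
  simp only [Hinge, SimpleGraph.fromRel_adj, hingeRelB, Bool.and_eq_true, beq_iff_eq,
    ne_eq, Sum.inr.injEq]
  constructor
  · rintro ⟨hne, h | h⟩
    · exact ⟨h.1, Or.inl h.2⟩
    · exact ⟨h.1.symm, Or.inr h.2⟩
  · rintro ⟨h1, h2 | h2⟩
    · exact ⟨by rintro rfl; omega, Or.inl ⟨h1, h2⟩⟩
    · exact ⟨by rintro rfl; omega, Or.inr ⟨h1.symm, h2⟩⟩

lemma hinge_adj_inl_inl (k n : ℕ) (a b : Fin 2) :
    (Hinge k n).Adj (Sum.inl a) (Sum.inl b) ↔ a ≠ b := by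
  simp [Hinge, SimpleGraph.fromRel_adj, hingeRelB]
  tauto

lemma sum_fin_val_eq {N : ℕ} (a : ℕ) (c : Fin N → ℤ) :
    (∑ j : Fin N, if (j : ℕ) = a then c j else 0) = if h : a < N then c ⟨a, h⟩ else 0 := by
  split
  · next h =>
    rw [show (∑ j : Fin N, if (j : ℕ) = a then c j else 0)
        = ∑ j : Fin N, if j = ⟨a, h⟩ then c j else 0 from
      Finset.sum_congr rfl (fun j _ => by simp [Fin.ext_iff])]
    simp
  · next h =>
    apply Finset.sum_eq_zero
    intro j _
    rw [if_neg]
    omega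

theorem hinge_epsilon_linearEquiv_delta' (k n : ℕ) (hk : 3 ≤ k) (hn : 2 ≤ n) (i : Fin n) :
    ∃ X : HingeVertex k n → ℤ, (Hinge k n).lapMatrix ℤ *ᵥ X =
    (k - 1) • pointDiff (hu k n) (hv k n i ⟨0, Nat.sub_pos_of_lt hk⟩) - pointDiff (hu k n) (hw k n) := by
  refine ⟨Sum.elim (fun _ => 0) (fun p => if p.1 = i then (p.2 : ℤ) + 2 - k else 0), ?_⟩
  funext a
  rw [lap_edge_formula]
  have h0 : 0 < k - 2 := by omega
  have hk3 : k - 3 < k - 2 := by omega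
  have h01 : ((0 : Fin 2) = 1) = False := by simp [Fin.ext_iff]
  have h10 : ((1 : Fin 2) = 0) = False := by simp [Fin.ext_iff]
  rcases a with a | ⟨m, j⟩
  · -- a = inl a
    rw [Fintype.sum_sum_type, Fin.sum_univ_two, Fintype.sum_prod_type]
    fin_cases a
    · -- u
      simp only [Fin.mk_zero, Fin.mk_one, hinge_adj_inl_inl, hinge_adj_inl_inr,
        Sum.elim_inl, Sum.elim_inr, sub_zero, zero_sub, ite_self, zero_add, add_zero,
        h01, h10, true_and, false_and, false_or, or_false, if_false, eq_self_iff_true, ne_eq,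
        not_true, not_false_eq_true, if_true]
      simp only [sum_fin_val_eq, dif_pos h0, apply_ite Neg.neg, neg_zero,
        Finset.sum_ite_eq', Finset.mem_univ, if_true]
      simp [pointDiff, hu, hw, hv, Prod.ext_iff, Fin.ext_iff, Sum.elim_inl]
      push_cast [Nat.cast_sub (by omega : 1 ≤ k)]
      ring
    · -- w
      simp only [Fin.mk_zero, Fin.mk_one, hinge_adj_inl_inl, hinge_adj_inl_inr,
        Sum.elim_inl, Sum.elim_inr, sub_zero, zero_sub, ite_self, zero_add, add_zero,
        h01, h10, true_and, false_and, false_or, or_false, if_false, eq_self_iff_true, ne_eq,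
        not_true, not_false_eq_true, if_true]
      simp only [sum_fin_val_eq, dif_pos hk3, apply_ite Neg.neg, neg_zero,
        Finset.sum_ite_eq', Finset.mem_univ, if_true]
      simp [pointDiff, hu, hw, hv, Prod.ext_iff, Fin.ext_iff, Sum.elim_inl]
      push_cast [Nat.cast_sub (by omega : 3 ≤ k)]
      ring
  · -- a = inr (m, j)
    rw [Fintype.sum_sum_type, Fin.sum_univ_two, Fintype.sum_prod_type]
    simp only [hinge_adj_inr_inl, hinge_adj_inr_inr, Sum.elim_inl, Sum.elim_inr, sub_zero,
      h01, h10, true_and, false_and, false_or, or_false, eq_self_iff_true, if_false]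
    have hA : ∀ (mm : Fin n) (jj : Fin (k-2)),
        (if m = mm ∧ ((jj:ℕ) = (j:ℕ) + 1 ∨ (j:ℕ) = (jj:ℕ) + 1) then
          (if m = i then (j:ℤ) + 2 - k else 0) - (if mm = i then (jj:ℤ) + 2 - k else 0)
          else 0)
        = (if m = mm then
            ((if (jj:ℕ) = (j:ℕ) + 1 then
              ((if m = i then (j:ℤ) + 2 - k else 0) - (if m = i then (jj:ℤ) + 2 - k else 0)) else 0)
            + (if 1 ≤ (j:ℕ) ∧ (jj:ℕ) = (j:ℕ) - 1 then
              ((if m = i then (j:ℤ) + 2 - k else 0) - (if m = i then (jj:ℤ) + 2 - k else 0)) else 0))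
          else 0) := by
      intro mm jj
      rcases eq_or_ne m mm with rfl | hne
      · split_ifs <;> first | rfl | omega | simp_all | ring
      · rw [if_neg (by tauto), if_neg hne]
    have hB : ∀ jj : Fin (k-2),
        (if 1 ≤ (j:ℕ) ∧ (jj:ℕ) = (j:ℕ) - 1 then
          ((if m = i then (j:ℤ) + 2 - k else 0) - (if m = i then (jj:ℤ) + 2 - k else 0)) else 0)
        = (if (jj:ℕ) = (j:ℕ) - 1 then (if 1 ≤ (j:ℕ) then
          ((if m = i then (j:ℤ) + 2 - k else 0) - (if m = i then (jj:ℤ) + 2 - k else 0)) else 0) else 0) := by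
      intro jj
      split_ifs <;> first | rfl | omega
    have hswap : ∀ (c : Prop) [Decidable c] (f : Fin (k-2) → ℤ),
        (∑ x1, if c then f x1 else 0) = if c then ∑ x1, f x1 else 0 := by
      intro c _ f; split <;> simp
    simp only [hA, hB]
    simp only [hswap, Finset.sum_ite_eq, Finset.mem_univ, if_true, Finset.sum_add_distrib]
    simp only [sum_fin_val_eq]
    simp only [pointDiff, hu, hw, hv, Pi.sub_apply, Pi.smul_apply, Sum.inr.injEq, Prod.mk.injEq,
      reduceCtorEq, if_false, sub_zero]
    have hj00 : (j = (⟨0, h0⟩ : Fin (k-2))) = ((j:ℕ) = 0) := by simp [Fin.ext_iff]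
    simp only [hj00, smul_eq_mul, nsmul_eq_mul, Fin.val_mk]
    rcases eq_or_ne m i with rfl | hmi
    · simp only [eq_self_iff_true, if_true, true_and]
      split_ifs <;>
        push_cast [Nat.cast_sub (by omega : 1 ≤ k), Fin.val_mk] <;> omega
    · simp [hmi]

/-- For all integers `k ≥ 3`, `n ≥ 2` and any index `i`, the divisor
`(k-1) • ε_i - δ` is principal on `H_{k,n}`, i.e. `(k-1) • ε_i` is linearly equivalent
to `δ`. -/
theorem hinge_epsilon_linearEquiv_delta (k n : ℕ) (hk : 3 ≤ k) (hn : 2 ≤ n) (i : Fin n) :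
    (k - 1) • pointDiff (hu k n) (hv k n i ⟨0, by omega⟩) - pointDiff (hu k n) (hw k n) ∈
      Prin (Hinge k n) := by
  obtain ⟨X, hX⟩ := hinge_epsilon_linearEquiv_delta' k n hk hn i
  exact ⟨X, by simpa [Matrix.mulVecLin_apply] using hX⟩
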